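/- arXiv:2012.01656 — 5 statements merged into one kernel-verified Lean document; each statement's English description precedes it below -/
import Mathlib

section
/- The category of directed multigraphs — the functor category from the walking parallel pair to the category of types (equivalently, presheaves on the category with two objects and a parallel pair of arrows between them) — is adhesive: it has pullbacks, pushouts along monomorphisms exist, and every pushout along a monomorphism is a van Kampen square. -/
open CategoryTheory CategoryTheory.Limits

/-- The category of directed multigraphs, presented as the functor category from the
walking parallel pair to `Type`, is adhesive: it has pullbacks, pushouts along
monomorphisms exist, and every pushout along a monomorphism is a van Kampen square. -/
theorem graphs_adhesive :
    HasPullbacks (WalkingParallelPair ⥤ Type) ∧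
    (∀ {S X Y : WalkingParallelPair ⥤ Type} (f : S ⟶ X) (g : S ⟶ Y),
      Mono f → HasPushout f g) ∧
    (∀ {W X Y Z : WalkingParallelPair ⥤ Type} (f : W ⟶ X) (g : W ⟶ Y)
      (h : X ⟶ Z) (i : Y ⟶ Z), Mono f → ∀ (H : IsPushout f g h i), H.IsVanKampen) ∧
    Adhesive (WalkingParallelPair ⥤ Type) := by
  refine ⟨inferInstance, ?_, ?_, inferInstance⟩
  · intro S X Y f g hf
    exact @Adhesive.hasPushout_of_mono_left _ _ _ _ _ _ f g hf
  · intro W X Y Z f g h i hf H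
    exact @Adhesive.van_kampen _ _ _ _ _ _ _ _ _ _ _ hf H
end

section
/- If C is an adhesive category and X is an object of C, then the over (slice) category C/X is adhesive. In particular, for a fixed type graph TG, the category of TG-typed graphs, being the slice of the category of directed multigraphs over TG, is adhesive. -/
open CategoryTheory CategoryTheory.Limits

namespace SliceAdhesive

universe v u

variable {C : Type u} [Category.{v} C] {B : C}

/-- The forgetful functor from the slice preserves connected limits (unconditionally). -/
noncomputable instance forgetPreservesConnected {J : Type*} [Category J] [IsConnected J] :
    PreservesLimitsOfShape J (Over.forget B) where
  preservesLimit {F} := ⟨fun {c} hc => ⟨{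
    lift := fun s => (hc.lift (CostructuredArrow.CreatesConnected.raiseCone s)).left
    fac := fun s j => by
      have h := congrArg CommaMorphism.left (hc.fac (CostructuredArrow.CreatesConnected.raiseCone s) j)
      erw [Comma.comp_left] at h
      exact h
    uniq := fun s m hm => by
      let j₀ := Classical.arbitrary J
      have hw : (c.π.app j₀).left ≫ (F.obj j₀).hom = c.pt.hom := Over.w (c.π.app j₀)
      have hhom : m ≫ c.pt.hom =
          (CostructuredArrow.CreatesConnected.raiseCone s).pt.hom := by
        dsimp [CostructuredArrow.CreatesConnected.raiseCone]
        erw [← hw, ← Category.assoc]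
        have h := hm j₀
        dsimp at h
        rw [h]; rfl
      let m' : (CostructuredArrow.CreatesConnected.raiseCone s).pt ⟶ c.pt := Over.homMk m hhom
      have : m' = hc.lift (CostructuredArrow.CreatesConnected.raiseCone s) := by
        apply hc.uniq
        intro j
        ext
        exact hm j
      exact congrArg CommaMorphism.left this }⟩⟩

theorem isPullback_iff {P Q R S : Over B} {fst : P ⟶ Q} {snd : P ⟶ R} {f : Q ⟶ S} {g : R ⟶ S}
    (w : fst ≫ f = snd ≫ g) :
    IsPullback fst snd f g ↔ IsPullback fst.left snd.left f.left g.left :=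
  (IsPullback.map_iff (Over.forget B) w).symm

theorem isPushout_iff {P Q R S : Over B} {f : P ⟶ Q} {g : P ⟶ R} {h : Q ⟶ S} {i : R ⟶ S}
    (w : f ≫ h = g ≫ i) [HasPushout f.left g.left] :
    IsPushout f g h i ↔ IsPushout f.left g.left h.left i.left := by
  haveI : HasColimit (span ((Over.forget B).map f) ((Over.forget B).map g)) :=
    inferInstanceAs (HasPushout f.left g.left)
  haveI : HasColimit (span f g ⋙ Over.forget B) :=
    hasColimit_of_iso (spanCompIso (Over.forget B) f g)
  exact (IsPushout.map_iff (Over.forget B) w).symm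

theorem over_adhesive [Adhesive C] : Adhesive (Over B) := by
  have h₁ : ∀ {P Q S : Over B} (f : P ⟶ S) (g : Q ⟶ S) [Mono f], HasPullback f g := by
    intro P Q S f g hf
    haveI : Mono f.left := Over.mono_left_of_mono f
    haveI : HasLimit (cospan ((Over.forget B).map f) ((Over.forget B).map g)) :=
      inferInstanceAs (HasPullback f.left g.left)
    haveI : HasLimit (cospan f g ⋙ Over.forget B) :=
      hasLimit_of_iso (cospanCompIso (Over.forget B) f g).symm
    exact hasLimit_of_created (cospan f g) (Over.forget B)
  have h₂ : ∀ {P Q S : Over B} (f : S ⟶ P) (g : S ⟶ Q) [Mono f], HasPushout f g := by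
    intro P Q S f g hf
    haveI : Mono f.left := Over.mono_left_of_mono f
    haveI : HasColimit (span ((Over.forget B).map f) ((Over.forget B).map g)) :=
      inferInstanceAs (HasPushout f.left g.left)
    haveI : HasColimit (span f g ⋙ Over.forget B) :=
      hasColimit_of_iso (spanCompIso (Over.forget B) f g)
    exact Over.hasColimit_of_hasColimit_comp_forget _
  refine Adhesive.mk (hasPullback_of_mono_left := h₁) (hasPushout_of_mono_left := h₂) ?_
  · intro W X Y Z f g h i hf H
    haveI : Mono f.left := Over.mono_left_of_mono f
    have Hl : IsPushout f.left g.left h.left i.left := (isPushout_iff H.w).mp H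
    intro W' X' Y' Z' f' g' h' i' αW αX αY αZ hαX hαY hh hi w
    have hαXl : IsPullback f'.left αW.left αX.left f.left := (isPullback_iff hαX.w).mp hαX
    have hαYl : IsPullback g'.left αW.left αY.left g.left := (isPullback_iff hαY.w).mp hαY
    haveI : Mono f'.left := PullbackCone.mono_fst_of_is_pullback_of_mono hαXl.isLimit
    have hhl : CommSq h'.left αX.left αZ.left h.left :=
      ⟨by simpa using congrArg CommaMorphism.left hh.w⟩
    have hil : CommSq i'.left αY.left αZ.left i.left :=
      ⟨by simpa using congrArg CommaMorphism.left hi.w⟩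
    have wl : CommSq f'.left g'.left h'.left i'.left :=
      ⟨by simpa using congrArg CommaMorphism.left w.w⟩
    have vk := Adhesive.van_kampen Hl f'.left g'.left h'.left i'.left
      αW.left αX.left αY.left αZ.left hαXl hαYl hhl hil wl
    rw [isPushout_iff w.w, isPullback_iff hh.w, isPullback_iff hi.w]
    exact vk

end SliceAdhesive

/-- If `C` is an adhesive category and `X : C`, then the over (slice) category `Over X`
is adhesive.  In particular, for a fixed type graph `TG` (an object of the category of
directed multigraphs, i.e. of the functor category from the walking parallel pair to
`Type`), the category of `TG`-typed graphs, being the slice over `TG`, is adhesive. -/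
theorem slice_adhesive {C : Type u} [Category.{v} C] [Adhesive C] (X : C)
    (TG : WalkingParallelPair ⥤ Type) :
    Adhesive (Over X) ∧ Adhesive (Over TG) := by
  exact ⟨SliceAdhesive.over_adhesive, SliceAdhesive.over_adhesive⟩
end

section
/- Shift lemma: let b : P → R be an injective morphism of finite directed multigraphs and let d be a condition over P. Then there exists a condition d' over R (the shift of d along b, constructed as a finite disjunction over jointly surjective pairs of injective morphisms completing commuting squares over b and the morphisms of d) such that for every directed multigraph H and every injective morphism n : R → H: n ∘ b satisfies d if and only if n satisfies d'. -/
/-- A directed multigraph: a set of nodes, a set of edges, and source/target maps. -/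
structure MGraph : Type 1 where
  V : Type
  E : Type
  s : E → V
  t : E → V

/-- A morphism of directed multigraphs: maps on nodes and edges compatible with
sources and targets. -/
structure GraphHom (G H : MGraph) : Type where
  fV : G.V → H.V
  fE : G.E → H.E
  src : ∀ e, H.s (fE e) = fV (G.s e)
  tgt : ∀ e, H.t (fE e) = fV (G.t e)

/-- Composition of graph morphisms. -/
def GraphHom.comp {G H K : MGraph} (g : GraphHom H K) (f : GraphHom G H) :
    GraphHom G K where
  fV := g.fV ∘ f.fV
  fE := g.fE ∘ f.fE
  src e := by simp [g.src, f.src]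
  tgt e := by simp [g.tgt, f.tgt]

/-- A graph morphism is injective if it is injective on nodes and on edges. -/
def GraphHom.Injective {G H : MGraph} (f : GraphHom G H) : Prop :=
  Function.Injective f.fV ∧ Function.Injective f.fE

/-- A graph is finite if its node set and edge set are finite. -/
def MGraph.Finite (G : MGraph) : Prop :=
  _root_.Finite G.V ∧ _root_.Finite G.E

/-- Nested graph conditions over a graph `A`: `true`, existential conditions
`∃(a, c)` along an injective morphism `a : A → C` into a finite graph `C`,
negation, and (binary) conjunction. -/
inductive Cond : MGraph → Type 1 where
  | tru (A : MGraph) : Cond A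
  | ex {A C : MGraph} (a : GraphHom A C) (hC : C.Finite) (ha : a.Injective)
      (c : Cond C) : Cond A
  | not {A : MGraph} (c : Cond A) : Cond A
  | and {A : MGraph} (c₁ c₂ : Cond A) : Cond A

/-- Satisfaction of a condition over `A` by a morphism `A → G`. -/
def Sat {G : MGraph} : {A : MGraph} → GraphHom A G → Cond A → Prop
  | _, _, Cond.tru _ => True
  | _, p, Cond.ex a _ _ c => ∃ q, GraphHom.Injective q ∧ q.comp a = p ∧ Sat q c
  | _, p, Cond.not c => ¬ Sat p c
  | _, p, Cond.and c₁ c₂ => Sat p c₁ ∧ Sat p c₂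

section ShiftAux

theorem GraphHom.ext' {G H : MGraph} {f g : GraphHom G H}
    (hV : f.fV = g.fV) (hE : f.fE = g.fE) : f = g := by
  cases f; cases g; simp_all

theorem GraphHom.comp_assoc {G H K L : MGraph} (h : GraphHom K L)
    (g : GraphHom H K) (f : GraphHom G H) :
    (h.comp g).comp f = h.comp (g.comp f) := by
  apply GraphHom.ext' <;> rfl

theorem GraphHom.Injective.comp {G H K : MGraph} {g : GraphHom H K}
    {f : GraphHom G H} (hg : g.Injective) (hf : f.Injective) :
    (g.comp f).Injective :=
  ⟨hg.1.comp hf.1, hg.2.comp hf.2⟩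

/-- Disjunction of conditions, encoded with `not`/`and`. -/
def Cond.or {A : MGraph} (c₁ c₂ : Cond A) : Cond A :=
  Cond.not (Cond.and (Cond.not c₁) (Cond.not c₂))

/-- The false condition. -/
def Cond.fls (A : MGraph) : Cond A := Cond.not (Cond.tru A)

/-- Finite disjunction of a list of conditions. -/
def Cond.disj {A : MGraph} : List (Cond A) → Cond A
  | [] => Cond.fls A
  | c :: l => Cond.or c (Cond.disj l)

theorem sat_or {G A : MGraph} (p : GraphHom A G) (c₁ c₂ : Cond A) :
    Sat p (Cond.or c₁ c₂) ↔ Sat p c₁ ∨ Sat p c₂ := by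
  simp only [Cond.or, Sat]; tauto

theorem sat_disj {G A : MGraph} (p : GraphHom A G) (l : List (Cond A)) :
    Sat p (Cond.disj l) ↔ ∃ c ∈ l, Sat p c := by
  induction l with
  | nil => simp [Cond.disj, Cond.fls, Sat]
  | cons c l ih =>
    simp only [Cond.disj, sat_or, ih, List.mem_cons]
    constructor
    · rintro (h | ⟨c', hc', h⟩)
      · exact ⟨c, Or.inl rfl, h⟩
      · exact ⟨c', Or.inr hc', h⟩
    · rintro ⟨c', (rfl | hc'), h⟩
      · exact Or.inl h
      · exact Or.inr ⟨c', hc', h⟩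

open Classical in
/-- The partial matching induced by two maps into a common codomain:
`x` is matched to the (unique, if `nf` is injective) `r` with `nf r = qf x`. -/
noncomputable def pmatch {α β γ : Type} (nf : α → γ) (qf : β → γ) (x : β) :
    Option α :=
  if h : ∃ r, nf r = qf x then some h.choose else none

theorem pmatch_some {α β γ : Type} {nf : α → γ} {qf : β → γ} {x : β} {r : α}
    (h : pmatch nf qf x = some r) : nf r = qf x := by
  unfold pmatch at h
  split_ifs at h with h1
  rw [← Option.some_inj.mp h]
  exact h1.choose_spec

theorem pmatch_none {α β γ : Type} {nf : α → γ} {qf : β → γ} {x : β}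
    (h : pmatch nf qf x = none) (r : α) : nf r ≠ qf x := by
  unfold pmatch at h
  split_ifs at h with h1
  exact fun hc => h1 ⟨r, hc⟩

theorem pmatch_eq {α β γ : Type} {nf : α → γ} {qf : β → γ}
    (hinj : Function.Injective nf) {x : β} {r : α} (h : nf r = qf x) :
    pmatch nf qf x = some r := by
  have hx : ∃ r, nf r = qf x := ⟨r, h⟩
  unfold pmatch
  rw [dif_pos hx]
  exact congrArg some (hinj (hx.choose_spec.trans h.symm))

/-- A partial injective matching between `R` and `C` extending the overlap
along `b : P → R` and `a : P → C`, compatible with sources and targets. -/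
structure Matching {P R C : MGraph} (b : GraphHom P R) (a : GraphHom P C) :
    Type where
  mV : C.V → Option R.V
  mE : C.E → Option R.E
  injV : ∀ x y r, mV x = some r → mV y = some r → x = y
  injE : ∀ x y r, mE x = some r → mE y = some r → x = y
  compat_s : ∀ f e, mE f = some e → mV (C.s f) = some (R.s e)
  compat_t : ∀ f e, mE f = some e → mV (C.t f) = some (R.t e)
  cont_V : ∀ p, mV (a.fV p) = some (b.fV p)
  cont_E : ∀ p, mE (a.fE p) = some (b.fE p)

namespace Matching

variable {P R C : MGraph} {b : GraphHom P R} {a : GraphHom P C}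

theorem finite (hR : R.Finite) (hC : C.Finite) : Finite (Matching b a) := by
  classical
  haveI := hR.1; haveI := hR.2; haveI := hC.1; haveI := hC.2
  haveI := Fintype.ofFinite R.V; haveI := Fintype.ofFinite R.E
  haveI := Fintype.ofFinite C.V; haveI := Fintype.ofFinite C.E
  apply Finite.of_injective
    (fun m : Matching b a => (m.mV, m.mE))
  intro m₁ m₂ h
  cases m₁; cases m₂; simp_all

/-- Glued node map. -/
def cV (m : Matching b a) (x : C.V) :
    R.V ⊕ {x : C.V // m.mV x = none} :=
  match h : m.mV x with
  | some r => Sum.inl r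
  | none => Sum.inr ⟨x, h⟩

/-- Glued edge map. -/
def cE (m : Matching b a) (f : C.E) :
    R.E ⊕ {f : C.E // m.mE f = none} :=
  match h : m.mE f with
  | some e => Sum.inl e
  | none => Sum.inr ⟨f, h⟩

theorem cV_some (m : Matching b a) {x : C.V} {r : R.V}
    (h : m.mV x = some r) : m.cV x = Sum.inl r := by
  unfold cV; split <;> simp_all

theorem cV_none (m : Matching b a) {x : C.V}
    (h : m.mV x = none) : m.cV x = Sum.inr ⟨x, h⟩ := by
  unfold cV; split <;> simp_all

theorem cE_some (m : Matching b a) {f : C.E} {e : R.E}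
    (h : m.mE f = some e) : m.cE f = Sum.inl e := by
  unfold cE; split <;> simp_all

theorem cE_none (m : Matching b a) {f : C.E}
    (h : m.mE f = none) : m.cE f = Sum.inr ⟨f, h⟩ := by
  unfold cE; split <;> simp_all

theorem cV_injective (m : Matching b a) : Function.Injective m.cV := by
  intro x y hxy
  rcases hx : m.mV x with _ | r <;> rcases hy : m.mV y with _ | r'
  · rw [m.cV_none hx, m.cV_none hy] at hxy
    simpa using hxy
  · rw [m.cV_none hx, m.cV_some hy] at hxy; simp at hxy
  · rw [m.cV_some hx, m.cV_none hy] at hxy; simp at hxy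
  · rw [m.cV_some hx, m.cV_some hy] at hxy
    simp only [Sum.inl.injEq] at hxy
    subst hxy
    exact m.injV x y r hx hy

theorem cE_injective (m : Matching b a) : Function.Injective m.cE := by
  intro x y hxy
  rcases hx : m.mE x with _ | r <;> rcases hy : m.mE y with _ | r'
  · rw [m.cE_none hx, m.cE_none hy] at hxy
    simpa using hxy
  · rw [m.cE_none hx, m.cE_some hy] at hxy; simp at hxy
  · rw [m.cE_some hx, m.cE_none hy] at hxy; simp at hxy
  · rw [m.cE_some hx, m.cE_some hy] at hxy
    simp only [Sum.inl.injEq] at hxy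
    subst hxy
    exact m.injE x y r hx hy

/-- The glued graph along a matching. -/
def glue (m : Matching b a) : MGraph where
  V := R.V ⊕ {x : C.V // m.mV x = none}
  E := R.E ⊕ {f : C.E // m.mE f = none}
  s := Sum.elim (fun e => Sum.inl (R.s e)) (fun f => m.cV (C.s f.1))
  t := Sum.elim (fun e => Sum.inl (R.t e)) (fun f => m.cV (C.t f.1))

theorem glue_finite (m : Matching b a) (hR : R.Finite) (hC : C.Finite) :
    (m.glue).Finite := by
  classical
  haveI := hR.1; haveI := hR.2; haveI := hC.1; haveI := hC.2
  haveI := Fintype.ofFinite R.V; haveI := Fintype.ofFinite R.E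
  haveI := Fintype.ofFinite C.V; haveI := Fintype.ofFinite C.E
  constructor
  · exact inferInstanceAs (Finite (R.V ⊕ {x : C.V // m.mV x = none}))
  · exact inferInstanceAs (Finite (R.E ⊕ {f : C.E // m.mE f = none}))

/-- Canonical injection of `R` into the glued graph. -/
def inR (m : Matching b a) : GraphHom R m.glue where
  fV := Sum.inl
  fE := Sum.inl
  src _ := rfl
  tgt _ := rfl

theorem inR_injective (m : Matching b a) : (m.inR).Injective :=
  ⟨Sum.inl_injective, Sum.inl_injective⟩

/-- Canonical injection of `C` into the glued graph. -/
def inC (m : Matching b a) : GraphHom C m.glue where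
  fV := m.cV
  fE := m.cE
  src f := by
    rcases h : m.mE f with _ | e
    · rw [m.cE_none h]; rfl
    · rw [m.cE_some h]
      show Sum.inl (R.s e) = m.cV (C.s f)
      rw [m.cV_some (m.compat_s f e h)]
  tgt f := by
    rcases h : m.mE f with _ | e
    · rw [m.cE_none h]; rfl
    · rw [m.cE_some h]
      show Sum.inl (R.t e) = m.cV (C.t f)
      rw [m.cV_some (m.compat_t f e h)]

theorem inC_injective (m : Matching b a) : (m.inC).Injective :=
  ⟨m.cV_injective, m.cE_injective⟩

theorem square (m : Matching b a) : (m.inC).comp a = (m.inR).comp b := by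
  apply GraphHom.ext'
  · funext p
    show m.cV (a.fV p) = Sum.inl (b.fV p)
    exact m.cV_some (m.cont_V p)
  · funext p
    show m.cE (a.fE p) = Sum.inl (b.fE p)
    exact m.cE_some (m.cont_E p)

end Matching

theorem shift_aux {A : MGraph} (d : Cond A) :
    ∀ {R : MGraph}, R.Finite → ∀ (b : GraphHom A R), b.Injective →
      ∃ d' : Cond R, ∀ (H : MGraph) (n : GraphHom R H), n.Injective →
        (Sat (n.comp b) d ↔ Sat n d') := by
  induction d with
  | tru A =>
    intro R hR b hb
    exact ⟨Cond.tru R, fun H n hn => by simp [Sat]⟩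
  | not c ih =>
    intro R hR b hb
    obtain ⟨d', hd'⟩ := ih hR b hb
    exact ⟨Cond.not d', fun H n hn => by simp only [Sat, hd' H n hn]⟩
  | and c₁ c₂ ih₁ ih₂ =>
    intro R hR b hb
    obtain ⟨d₁, h₁⟩ := ih₁ hR b hb
    obtain ⟨d₂, h₂⟩ := ih₂ hR b hb
    exact ⟨Cond.and d₁ d₂, fun H n hn => by
      simp only [Sat, h₁ H n hn, h₂ H n hn]⟩
  | @ex A C a hC ha c ih =>
    intro R hR b hb
    haveI : Finite (Matching b a) := Matching.finite hR hC
    haveI : Fintype (Matching b a) := Fintype.ofFinite _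
    choose d'' hd'' using fun m : Matching b a =>
      ih (m.glue_finite hR hC) m.inC m.inC_injective
    refine ⟨Cond.disj ((Finset.univ : Finset (Matching b a)).toList.map
      fun m => Cond.ex m.inR (m.glue_finite hR hC) m.inR_injective (d'' m)),
      fun H n hn => ?_⟩
    rw [show Sat (n.comp b) (Cond.ex a hC ha c) =
      ∃ q, GraphHom.Injective q ∧ q.comp a = n.comp b ∧ Sat q c from rfl, sat_disj]
    constructor
    · rintro ⟨q, hq, hcomm, hsat⟩
      have hcommV : ∀ p, q.fV (a.fV p) = n.fV (b.fV p) := by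
        intro p; exact congrFun (congrArg GraphHom.fV hcomm) p
      have hcommE : ∀ p, q.fE (a.fE p) = n.fE (b.fE p) := by
        intro p; exact congrFun (congrArg GraphHom.fE hcomm) p
      -- the matching induced by n and q
      refine
        let m0 : Matching b a :=
        { mV := pmatch n.fV q.fV
          mE := pmatch n.fE q.fE
          injV := fun x y r hx hy =>
            hq.1 ((pmatch_some hx).symm.trans (pmatch_some hy))
          injE := fun x y r hx hy =>
            hq.2 ((pmatch_some hx).symm.trans (pmatch_some hy))
          compat_s := fun f e hf => by
            apply pmatch_eq hn.1
            rw [← n.src, pmatch_some hf, q.src]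
          compat_t := fun f e hf => by
            apply pmatch_eq hn.1
            rw [← n.tgt, pmatch_some hf, q.tgt]
          cont_V := fun p => pmatch_eq hn.1 (hcommV p).symm
          cont_E := fun p => pmatch_eq hn.2 (hcommE p).symm }
        ?_
      have m0V_some : ∀ {x r}, m0.mV x = some r → n.fV r = q.fV x :=
        fun h => pmatch_some h
      have m0E_some : ∀ {f e}, m0.mE f = some e → n.fE e = q.fE f :=
        fun h => pmatch_some h
      -- the mediating morphism q' : glue m0 → H
      refine
        let q' : GraphHom m0.glue H :=
        { fV := Sum.elim n.fV (fun x => q.fV x.1)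
          fE := Sum.elim n.fE (fun f => q.fE f.1)
          src := by
            rintro (e | ⟨f, hf⟩)
            · exact n.src e
            · show H.s (q.fE f) =
                Sum.elim n.fV (fun x => q.fV x.1) (m0.cV (C.s f))
              rcases h : m0.mV (C.s f) with _ | r
              · rw [m0.cV_none h]; exact q.src f
              · rw [m0.cV_some h]
                show H.s (q.fE f) = n.fV r
                rw [q.src, ← m0V_some h]
          tgt := by
            rintro (e | ⟨f, hf⟩)
            · exact n.tgt e
            · show H.t (q.fE f) =
                Sum.elim n.fV (fun x => q.fV x.1) (m0.cV (C.t f))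
              rcases h : m0.mV (C.t f) with _ | r
              · rw [m0.cV_none h]; exact q.tgt f
              · rw [m0.cV_some h]
                show H.t (q.fE f) = n.fV r
                rw [q.tgt, ← m0V_some h] }
        ?_
      have hq'inj : q'.Injective := by
        constructor
        · rintro (x | ⟨x, hx⟩) (y | ⟨y, hy⟩) hxy
          · exact congrArg Sum.inl (hn.1 hxy)
          · exact absurd hxy (pmatch_none hy x)
          · exact absurd hxy.symm (pmatch_none hx y)
          · exact congrArg Sum.inr (Subtype.ext (hq.1 hxy))
        · rintro (x | ⟨x, hx⟩) (y | ⟨y, hy⟩) hxy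
          · exact congrArg Sum.inl (hn.2 hxy)
          · exact absurd hxy (pmatch_none hy x)
          · exact absurd hxy.symm (pmatch_none hx y)
          · exact congrArg Sum.inr (Subtype.ext (hq.2 hxy))
      have hq'R : q'.comp m0.inR = n := by
        apply GraphHom.ext' <;> rfl
      have hq'C : q'.comp m0.inC = q := by
        apply GraphHom.ext'
        · funext x
          show Sum.elim n.fV (fun x => q.fV x.1) (m0.cV x) = q.fV x
          rcases h : m0.mV x with _ | r
          · rw [m0.cV_none h]; rfl
          · rw [m0.cV_some h]; exact m0V_some h
        · funext f
          show Sum.elim n.fE (fun f => q.fE f.1) (m0.cE f) = q.fE f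
          rcases h : m0.mE f with _ | e
          · rw [m0.cE_none h]; rfl
          · rw [m0.cE_some h]; exact m0E_some h
      refine ⟨Cond.ex m0.inR (m0.glue_finite hR hC) m0.inR_injective (d'' m0),
        List.mem_map.mpr ⟨m0, Finset.mem_toList.mpr (Finset.mem_univ m0), rfl⟩, ?_⟩
      refine ⟨q', hq'inj, hq'R, ?_⟩
      rw [← hd'' m0 H q' hq'inj, hq'C]
      exact hsat
    · rintro ⟨c', hc', hsat⟩
      obtain ⟨m, -, rfl⟩ := List.mem_map.mp hc'
      obtain ⟨q', hq', hcomm, hsat'⟩ := hsat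
      refine ⟨q'.comp m.inC, hq'.comp m.inC_injective, ?_, ?_⟩
      · rw [GraphHom.comp_assoc, m.square, ← GraphHom.comp_assoc, hcomm]
      · rw [hd'' m H q' hq']
        exact hsat'

end ShiftAux

/-- Shift lemma: a condition `d` over `P` can be shifted along an injective morphism
`b : P → R` of finite graphs to a condition `d'` over `R` such that for all graphs `H`
and injective `n : R → H`, `n ∘ b ⊨ d` iff `n ⊨ d'`. -/
theorem shift_lemma {P R : MGraph} (hP : P.Finite) (hR : R.Finite)
    (b : GraphHom P R) (hb : b.Injective) (d : Cond P) :
    ∃ d' : Cond R, ∀ (H : MGraph) (n : GraphHom R H), n.Injective →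
      (Sat (n.comp b) d ↔ Sat n d') := by
  obtain ⟨d', hd'⟩ := shift_aux d hR b hb
  exact ⟨d', hd'⟩
end

section
/- Preserving repair (sequential composition): let X be a type, n ≥ 1, let d_1, …, d_n be predicates on X and P_1, …, P_n binary relations on X. Assume each P_i is a repair relation for d_i, and assume the sequence is preserving: for every k with 2 ≤ k ≤ n, whenever P_k G H and d_i G holds for all i < k, then d_i H holds for all i < k. Then the sequential composition P_1 ; … ; P_n is a repair relation for the conjunction d_1 ∧ … ∧ d_n: it is total, and whenever (P_1 ; … ; P_n) G H, all of d_1 H, …, d_n H hold. -/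
/-- Sequential (relational) composition of a list of binary relations:
`SeqComp [] G H` iff `G = H`, and `SeqComp (P :: Ps) G H` iff there is `M` with
`P G M` and `SeqComp Ps M H`. -/
def SeqComp {X : Type u} : List (X → X → Prop) → (X → X → Prop)
  | [] => fun G H => G = H
  | P :: Ps => fun G H => ∃ M, P G M ∧ SeqComp Ps M H

lemma seqcomp_total {X : Type u} :
    ∀ (L : List (X → X → Prop)), (∀ P ∈ L, ∀ G, ∃ H, P G H) →
      ∀ G, ∃ H, SeqComp L G H
  | [], _, G => ⟨G, rfl⟩
  | P :: Ps, h, G => by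
    obtain ⟨M, hM⟩ := h P List.mem_cons_self G
    obtain ⟨H, hH⟩ := seqcomp_total Ps (fun Q hQ => h Q (List.mem_cons_of_mem _ hQ)) M
    exact ⟨H, M, hM, hH⟩

lemma seqcomp_correct {X : Type u} :
    ∀ (n : ℕ) (d : Fin n → X → Prop) (P : Fin n → X → X → Prop) (e : X → Prop),
    (∀ i G H, P i G H → d i H) →
    (∀ k G H, P k G H → (e G ∧ ∀ i, i < k → d i G) → e H ∧ ∀ i, i < k → d i H) →
    ∀ G H, SeqComp (List.ofFn P) G H → e G → e H ∧ ∀ i, d i H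
  | 0 => by
    intro d P e _ _ G H h he
    simp only [List.ofFn_zero, SeqComp] at h
    subst h
    exact ⟨he, fun i => i.elim0⟩
  | n + 1 => by
    intro d P e hcor hpres G H h he
    rw [List.ofFn_succ] at h
    obtain ⟨M, hGM, hMH⟩ := h
    have heM : e M :=
      (hpres 0 G M hGM ⟨he, fun i hi => absurd hi (Fin.not_lt_zero i)⟩).1
    have hd0M : d 0 M := hcor 0 G M hGM
    have key := seqcomp_correct n (fun i => d i.succ) (fun i => P i.succ)
      (fun x => e x ∧ d 0 x)
      (fun i G H hP => hcor i.succ G H hP)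
      (by
        rintro k G H hP ⟨⟨heG, hd0G⟩, hdG⟩
        have hall : ∀ i, i < k.succ → d i G := by
          intro i hi
          induction i using Fin.cases with
          | zero => exact hd0G
          | succ j => exact hdG j (Fin.succ_lt_succ_iff.mp hi)
        have := hpres k.succ G H hP ⟨heG, hall⟩
        exact ⟨⟨this.1, this.2 0 (Fin.succ_pos k)⟩,
          fun i hi => this.2 i.succ (Fin.succ_lt_succ_iff.mpr hi)⟩)
      M H hMH ⟨heM, hd0M⟩
    obtain ⟨⟨heH, hd0H⟩, hrest⟩ := key
    refine ⟨heH, fun i => ?_⟩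
    induction i using Fin.cases with
    | zero => exact hd0H
    | succ j => exact hrest j

/-- Preserving repair: if each `P i` is a repair relation for `d i` (total and
correct), and the sequence is preserving (each `P k` preserves all preceding
conditions `d i`, `i < k`), then the sequential composition `P 0 ; … ; P (n-1)` is a
repair relation for the conjunction of the `d i`: it is total, and every result
satisfies all of the `d i`. -/
theorem preserving_repair {X : Type u} {n : ℕ} (hn : 1 ≤ n)
    (d : Fin n → X → Prop) (P : Fin n → X → X → Prop)
    (htotal : ∀ i, ∀ G, ∃ H, P i G H)
    (hcorrect : ∀ i, ∀ G H, P i G H → d i H)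
    (hpres : ∀ k : Fin n, ∀ G H, P k G H →
      (∀ i : Fin n, i < k → d i G) → ∀ i : Fin n, i < k → d i H) :
    (∀ G, ∃ H, SeqComp (List.ofFn P) G H) ∧
    (∀ G H, SeqComp (List.ofFn P) G H → ∀ i, d i H) := by
  constructor
  · refine seqcomp_total _ ?_
    intro Q hQ G
    obtain ⟨i, rfl⟩ := List.mem_ofFn.mp hQ
    exact htotal i G
  · intro G H h
    exact (seqcomp_correct n d P (fun _ => True) hcorrect
      (fun k G H hP ⟨_, hd⟩ => ⟨trivial, hpres k G H hP hd⟩) G H h trivial).2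
end

section
/- Composition of repair relations: let X be a type, e₁, e₂ predicates on X and Q₁, Q₂ binary relations on X. If Q₁ is a repair relation for e₁ and Q₂ is an e₁-preserving repair relation for e₂, then the sequential composition Q₁ ; Q₂ is a repair relation for the conjunction e₁ ∧ e₂. -/
/-- Composition of repair relations: if `Q₁` is a repair relation for `e₁` (total and
correct) and `Q₂` is an `e₁`-preserving repair relation for `e₂`, then the sequential
composition `Q₁ ; Q₂` is a repair relation for the conjunction `e₁ ∧ e₂`. -/
theorem repair_composition {X : Type u} (e₁ e₂ : X → Prop) (Q₁ Q₂ : X → X → Prop)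
    (h₁total : ∀ G, ∃ H, Q₁ G H) (h₁correct : ∀ G H, Q₁ G H → e₁ H)
    (h₂total : ∀ G, ∃ H, Q₂ G H) (h₂correct : ∀ G H, Q₂ G H → e₂ H)
    (h₂pres : ∀ G H, Q₂ G H → e₁ G → e₁ H) :
    (∀ G, ∃ H, ∃ M, Q₁ G M ∧ Q₂ M H) ∧
    (∀ G H, (∃ M, Q₁ G M ∧ Q₂ M H) → e₁ H ∧ e₂ H) := by
  constructor
  · intro G
    obtain ⟨M, hM⟩ := h₁total G
    obtain ⟨H, hH⟩ := h₂total M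
    exact ⟨H, M, hM, hH⟩
  · rintro G H ⟨M, h1, h2⟩
    exact ⟨h₂pres M H h2 (h₁correct G M h1), h₂correct M H h2⟩
end
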